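/- Let {E_j}_{j=1}^M be finitely many CPTP maps on the d×d complex matrices, let S be a set of density matrices, and let V be a function from density matrices to the nonnegative reals with V(ρ) = 0 if and only if ρ ∈ S. Assume: (i) V(E_j(ρ)) ≤ V(ρ) for every j and every density matrix ρ; (ii) for every ε > 0 there is a finite sequence j_1,…,j_K ∈ {1,…,M} such that V(E_{j_K}∘⋯∘E_{j_1}(ρ)) < ε for every density matrix ρ. Let (J_t)_{t≥1} be independent random variables with values in {1,…,M} such that for some ε₀ > 0, P(J_t = j) ≥ ε₀ for all t and j, and for a fixed initial density matrix ρ₀ set ρ(t) = E_{J_t}∘⋯∘E_{J_1}(ρ₀). Then for every γ > 0, the probability P(V(ρ(t)) < γ) converges to 1 as t → ∞. -/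

import Mathlib

open Matrix Filter MeasureTheory ProbabilityTheory
open scoped ComplexOrder
open scoped ENNReal

/-- A map on `d × d` complex matrices is CPTP if it admits a Kraus (operator-sum)
representation `E(X) = ∑ k, M k * X * (M k)ᴴ` with `∑ k, (M k)ᴴ * M k = 1`. -/
def IsCPTP {d : ℕ} (E : Matrix (Fin d) (Fin d) ℂ → Matrix (Fin d) (Fin d) ℂ) : Prop :=
  ∃ (m : ℕ) (M : Fin m → Matrix (Fin d) (Fin d) ℂ),
    (∀ X, E X = ∑ k, M k * X * (M k)ᴴ) ∧ (∑ k, (M k)ᴴ * M k = 1)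

/-- A density matrix: positive semidefinite with trace one. -/
def IsDensity {d : ℕ} (ρ : Matrix (Fin d) (Fin d) ℂ) : Prop :=
  ρ.PosSemidef ∧ ρ.trace = 1

/-- The random trajectory `ρ(t) = E_{J_t} ∘ ⋯ ∘ E_{J_1}(ρ₀)` driven by the random
indices `J`. -/
def traj {d M : ℕ} {Ω : Type*} (Es : Fin M → (Matrix (Fin d) (Fin d) ℂ → Matrix (Fin d) (Fin d) ℂ))
    (J : ℕ → Ω → Fin M) (ρ₀ : Matrix (Fin d) (Fin d) ℂ) : ℕ → Ω → Matrix (Fin d) (Fin d) ℂ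
  | 0, _ => ρ₀
  | (t + 1), ω => Es (J t ω) (traj Es J ρ₀ t ω)

/-- Convergence in probability for randomized sequences of CPTP maps: if a Lyapunov
function `V` vanishing exactly on `S` is non-increasing under each map and can be made
arbitrarily small by some finite sequence of the maps, and the maps are selected
independently at random with probabilities uniformly bounded below, then
`P(V(ρ(t)) < γ) → 1` for every `γ > 0`. -/
lemma IsCPTP.density {d : ℕ} {E : Matrix (Fin d) (Fin d) ℂ → Matrix (Fin d) (Fin d) ℂ}
    (hE : IsCPTP E) {ρ : Matrix (Fin d) (Fin d) ℂ} (hρ : IsDensity ρ) : IsDensity (E ρ) := by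
  obtain ⟨m, Ms, hK, hTP⟩ := hE
  obtain ⟨hpos, htr⟩ := hρ
  constructor
  · rw [hK]
    refine Finset.sum_induction _ _ (fun a b ha hb => ha.add hb) Matrix.PosSemidef.zero ?_
    exact fun k _ => hpos.mul_mul_conjTranspose_same (Ms k)
  · rw [hK, Matrix.trace_sum]
    have h1 : ∀ k, ((Ms k * ρ * (Ms k)ᴴ).trace) = ((Ms k)ᴴ * Ms k * ρ).trace := by
      intro k
      rw [Matrix.trace_mul_cycle]
    calc ∑ k, (Ms k * ρ * (Ms k)ᴴ).trace = ∑ k, ((Ms k)ᴴ * Ms k * ρ).trace := by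
          simp_rw [h1]
      _ = ((∑ k, (Ms k)ᴴ * Ms k) * ρ).trace := by rw [Finset.sum_mul, Matrix.trace_sum]
      _ = 1 := by rw [hTP, one_mul, htr]

lemma traj_density {d M : ℕ} {Ω : Type*}
    {Es : Fin M → (Matrix (Fin d) (Fin d) ℂ → Matrix (Fin d) (Fin d) ℂ)}
    (hEs : ∀ j, IsCPTP (Es j)) (J : ℕ → Ω → Fin M) {ρ₀ : Matrix (Fin d) (Fin d) ℂ}
    (hρ₀ : IsDensity ρ₀) : ∀ t ω, IsDensity (traj Es J ρ₀ t ω)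
  | 0, ω => hρ₀
  | (t+1), ω => (hEs (J t ω)).density (traj_density hEs J hρ₀ t ω)

lemma traj_mono {d M : ℕ} {Ω : Type*}
    {Es : Fin M → (Matrix (Fin d) (Fin d) ℂ → Matrix (Fin d) (Fin d) ℂ)}
    (hEs : ∀ j, IsCPTP (Es j)) {V : Matrix (Fin d) (Fin d) ℂ → ℝ}
    (hmono : ∀ j ρ, IsDensity ρ → V (Es j ρ) ≤ V ρ)
    (J : ℕ → Ω → Fin M) {ρ₀ : Matrix (Fin d) (Fin d) ℂ} (hρ₀ : IsDensity ρ₀)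
    (ω : Ω) {s t : ℕ} (hst : s ≤ t) :
    V (traj Es J ρ₀ t ω) ≤ V (traj Es J ρ₀ s ω) := by
  induction t with
  | zero => simp_all
  | succ t ih =>
    rcases Nat.lt_or_ge s (t+1) with h | h
    · exact le_trans (hmono (J t ω) _ (traj_density hEs J hρ₀ t ω))
        (ih (Nat.lt_succ_iff.mp h))
    · have : s = t + 1 := le_antisymm hst h
      subst this; exact le_rfl

lemma traj_block {d M : ℕ} {Ω : Type*}
    (Es : Fin M → (Matrix (Fin d) (Fin d) ℂ → Matrix (Fin d) (Fin d) ℂ))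
    (J : ℕ → Ω → Fin M) (ρ₀ : Matrix (Fin d) (Fin d) ℂ) :
    ∀ (K : ℕ) (js : Fin K → Fin M) (t0 : ℕ) (ω : Ω),
      (∀ k : Fin K, J (t0 + (k : ℕ)) ω = js k) →
      traj Es J ρ₀ (t0 + K) ω =
        (List.ofFn fun k => Es (js k)).foldl (fun σ f => f σ) (traj Es J ρ₀ t0 ω)
  | 0, js, t0, ω, h => by simp
  | (K+1), js, t0, ω, h => by
    have h0 : J t0 ω = js 0 := by simpa using h 0
    have hstep : traj Es J ρ₀ (t0 + 1) ω = Es (js 0) (traj Es J ρ₀ t0 ω) := by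
      simp [traj, h0]
    have ih := traj_block Es J ρ₀ K (fun k => js k.succ) (t0 + 1) ω (fun k => by
      have hk := h k.succ
      have : t0 + 1 + (k : ℕ) = t0 + ((k.succ : Fin (K+1)) : ℕ) := by
        simp [Fin.val_succ]; omega
      rw [this]; exact hk)
    have ht : t0 + (K + 1) = (t0 + 1) + K := by omega
    rw [ht, ih, hstep, List.ofFn_succ, List.foldl_cons]

theorem randomized_lyapunov_convergence_in_probability {d M : ℕ}
    (Es : Fin M → (Matrix (Fin d) (Fin d) ℂ → Matrix (Fin d) (Fin d) ℂ))
    (hEs : ∀ j, IsCPTP (Es j))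
    (S : Set (Matrix (Fin d) (Fin d) ℂ)) (V : Matrix (Fin d) (Fin d) ℂ → ℝ)
    (hV0 : ∀ ρ, IsDensity ρ → 0 ≤ V ρ)
    (hVS : ∀ ρ, IsDensity ρ → (V ρ = 0 ↔ ρ ∈ S))
    (hmono : ∀ j ρ, IsDensity ρ → V (Es j ρ) ≤ V ρ)
    (hcontract : ∀ ε > (0 : ℝ), ∃ (K : ℕ) (js : Fin K → Fin M), ∀ ρ, IsDensity ρ →
      V ((List.ofFn fun k => Es (js k)).foldl (fun σ f => f σ) ρ) < ε)
    {Ω : Type*} [MeasurableSpace Ω] (P : Measure Ω) [IsProbabilityMeasure P]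
    (J : ℕ → Ω → Fin M) (hJmeas : ∀ t, Measurable (J t))
    (hindep : iIndepFun J P)
    (ε₀ : ℝ) (hε₀ : 0 < ε₀) (hlow : ∀ t j, ENNReal.ofReal ε₀ ≤ P {ω | J t ω = j})
    (ρ₀ : Matrix (Fin d) (Fin d) ℂ) (hρ₀ : IsDensity ρ₀) :
    ∀ γ > (0 : ℝ),
      Tendsto (fun t : ℕ => P {ω | V (traj Es J ρ₀ t ω) < γ}) atTop (nhds 1) := by
  intro γ hγ
  obtain ⟨K, js, hKγ⟩ := hcontract γ hγ
  rcases Nat.eq_zero_or_pos K with hK0 | hK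
  · subst hK0
    have hall : ∀ t, {ω : Ω | V (traj Es J ρ₀ t ω) < γ} = Set.univ := by
      intro t
      apply Set.eq_univ_iff_forall.mpr
      intro ω
      have := hKγ (traj Es J ρ₀ t ω) (traj_density hEs J hρ₀ t ω)
      simpa using this
    simp only [hall, measure_univ]
    exact tendsto_const_nhds
  · set q : ℝ≥0∞ := ENNReal.ofReal ε₀ with hqdef
    have hq : q ≠ 0 := by
      simp only [hqdef, ne_eq, ENNReal.ofReal_eq_zero, not_le]; exact hε₀
    set tgt : ℕ → Fin M := fun t => js ⟨t % K, Nat.mod_lt t hK⟩ with htgt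
    set D : ℕ → Set Ω := fun t => J t ⁻¹' {tgt t} with hD
    set blk : ℕ → Finset ℕ := fun n => Finset.Ico (n*K) (n*K+K) with hblk
    set C : ℕ → Set Ω := fun n => ⋂ t ∈ blk n, D t with hC
    have hmeasD : ∀ t, MeasurableSet (D t) := fun t => (hJmeas t) (measurableSet_singleton _)
    have hmeasC : ∀ n, MeasurableSet (C n) := fun n =>
      MeasurableSet.biInter (Set.to_countable _) (fun t _ => hmeasD t)
    have hprod : ∀ Sf : Finset ℕ, P (⋂ t ∈ Sf, D t) = ∏ t ∈ Sf, P (D t) := fun Sf =>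
      hindep.meas_biInter (S := Sf) (s := D)
        (fun i _ => ⟨{tgt i}, measurableSet_singleton _, rfl⟩)
    have hPD : ∀ t, q ≤ P (D t) := fun t => hlow t (tgt t)
    have hPC : ∀ n, P (C n) = ∏ t ∈ blk n, P (D t) := fun n => hprod (blk n)
    have hPCq : ∀ n, q ^ K ≤ P (C n) := by
      intro n
      rw [hPC n]
      calc q ^ K = ∏ _t ∈ blk n, q := by
            rw [Finset.prod_const]; congr 1; simp [hblk]
        _ ≤ ∏ t ∈ blk n, P (D t) := Finset.prod_le_prod' (fun t _ => hPD t)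
    have hdisj : ∀ (a b : ℕ), a ≠ b → Disjoint (blk a) (blk b) := by
      intro a b hab
      rw [Finset.disjoint_left]
      intro t ha hb
      simp only [hblk, Finset.mem_Ico] at ha hb
      rcases hab.lt_or_gt with h | h
      · have h2 : a*K + K ≤ b*K := by
          calc a*K + K = (a+1)*K := by ring
            _ ≤ b*K := Nat.mul_le_mul_right K h
        exact absurd ((ha.2.trans_le h2).trans_le hb.1) (lt_irrefl t)
      · have h2 : b*K + K ≤ a*K := by
          calc b*K + K = (b+1)*K := by ring
            _ ≤ a*K := Nat.mul_le_mul_right K h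
        exact absurd ((hb.2.trans_le h2).trans_le ha.1) (lt_irrefl t)
    have hiIndep : iIndepSet C P := by
      rw [iIndepSet_iff_meas_biInter hmeasC]
      intro F
      have h1 : (⋂ n ∈ F, C n) = ⋂ t ∈ F.biUnion blk, D t := by
        rw [Finset.set_biInter_biUnion]
      rw [h1, hprod, Finset.prod_biUnion (fun a _ b _ hab => hdisj a b hab)]
      exact Finset.prod_congr rfl (fun n _ => (hPC n).symm)
    have htsum : (∑' n, P (C n)) = ⊤ := by
      refine top_le_iff.mp ?_
      calc (⊤ : ℝ≥0∞) = ∑' _ : ℕ, q ^ K :=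
            (ENNReal.tsum_const_eq_top_of_ne_zero (pow_ne_zero _ hq)).symm
        _ ≤ ∑' n, P (C n) := ENNReal.tsum_le_tsum hPCq
    have hlim : P (Filter.limsup C atTop) = 1 := measure_limsup_eq_one hmeasC hiIndep htsum
    have hU : P (⋃ n, C n) = 1 := by
      have hsub : Filter.limsup C atTop ⊆ ⋃ n, C n := limsup_le_iSup
      exact le_antisymm prob_le_one (hlim ▸ measure_mono hsub)
    set s : ℕ → Set Ω := fun N => ⋃ n ∈ Finset.range N, C n with hs
    have hmonoS : Monotone s := by
      intro a b hab ω hω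
      simp only [hs, Set.mem_iUnion, Finset.mem_range] at hω ⊢
      obtain ⟨n, hn, h⟩ := hω
      exact ⟨n, lt_of_lt_of_le hn hab, h⟩
    have hUnionS : (⋃ N, s N) = ⋃ n, C n := by
      ext ω
      simp only [hs, Set.mem_iUnion, Finset.mem_range]
      exact ⟨fun ⟨N, n, _, h⟩ => ⟨n, h⟩, fun ⟨n, h⟩ => ⟨n+1, n, Nat.lt_succ_self n, h⟩⟩
    have htendS : Tendsto (fun N => P (s N)) atTop (nhds 1) := by
      have h := tendsto_measure_iUnion_atTop (μ := P) hmonoS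
      rw [hUnionS, hU] at h
      exact h
    have hdiv : Tendsto (fun t : ℕ => t / K) atTop atTop :=
      tendsto_atTop_atTop.mpr fun b => ⟨b*K, fun t ht => (Nat.le_div_iff_mul_le hK).mpr ht⟩
    have hlower : ∀ t, P (s (t / K)) ≤ P {ω | V (traj Es J ρ₀ t ω) < γ} := by
      intro t
      apply measure_mono
      intro ω hω
      simp only [hs, Set.mem_iUnion, Finset.mem_range] at hω
      obtain ⟨n, hn, hωC⟩ := hω
      have hJs : ∀ k : Fin K, J (n*K + (k : ℕ)) ω = js k := by
        intro k
        have hmem : (n*K + (k : ℕ)) ∈ blk n := by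
          simp only [hblk, Finset.mem_Ico]
          exact ⟨Nat.le_add_right _ _, Nat.add_lt_add_left k.isLt _⟩
        have hωD : ω ∈ D (n*K + (k : ℕ)) := Set.mem_iInter₂.mp hωC _ hmem
        have htgtk : tgt (n*K + (k : ℕ)) = js k := by
          simp only [htgt]
          congr 1
          have hm : (n*K + (k : ℕ)) % K = (k : ℕ) := by
            rw [Nat.add_comm, Nat.add_mul_mod_self_right, Nat.mod_eq_of_lt k.isLt]
          exact Fin.ext hm
        simpa [hD, htgtk] using hωD
      have hblock := traj_block Es J ρ₀ K js (n*K) ω hJs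
      have hVlt : V (traj Es J ρ₀ (n*K + K) ω) < γ := by
        rw [hblock]
        exact hKγ _ (traj_density hEs J hρ₀ (n*K) ω)
      have hle : n*K + K ≤ t := by
        have h2 : (n+1)*K ≤ (t/K)*K := Nat.mul_le_mul_right K hn
        have h3 : (t/K)*K ≤ t := Nat.div_mul_le_self t K
        calc n*K + K = (n+1)*K := by ring
          _ ≤ t := le_trans h2 h3
      exact lt_of_le_of_lt (traj_mono hEs hmono J hρ₀ ω hle) hVlt
    refine tendsto_of_tendsto_of_tendsto_of_le_of_le (htendS.comp hdiv) tendsto_const_nhds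
      hlower (fun t => prob_le_one)
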